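/- arXiv:2012.11090 — 4 statements merged into one kernel-verified Lean document; each statement's English description precedes it below -/
import Mathlib

section
/- Let a_1, …, a_l, b_1, …, b_m, c_1, …, c_n be positive integers (l ≥ 0, m ≥ 1, n ≥ 1), all of which are at least 2, and assume b_1 < c_1. Then [[a_1, …, a_l, b_1, …, b_m]] < [[a_1, …, a_l, c_1, …, c_n]]. -/
/-- The Hirzebruch–Jung continued fraction `[[a₁, …, aₙ]]`, defined recursively by
`[[aₙ]] = aₙ` and `[[a₁, …, aₙ]] = a₁ - 1/[[a₂, …, aₙ]]`. The value on the empty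
list is junk. -/
noncomputable def hj : List ℝ → ℝ
  | [] => 0
  | [a] => a
  | a :: b :: l => a - 1 / hj (b :: l)

lemma hj_cons_cons (a b : ℝ) (l : List ℝ) : hj (a :: b :: l) = a - 1 / hj (b :: l) := rfl

lemma hj_gt_one : ∀ l : List ℝ, l ≠ [] → (∀ x ∈ l, 2 ≤ x) → 1 < hj l
  | [], h, _ => absurd rfl h
  | [a], _, h2 => by
    have := h2 a (by simp)
    show (1 : ℝ) < hj [a]
    simp only [hj]; linarith
  | a :: b :: l, _, h2 => by
    have ih : 1 < hj (b :: l) := hj_gt_one (b :: l) (by simp)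
      (fun x hx => h2 x (List.mem_cons_of_mem a hx))
    have ha : 2 ≤ a := h2 a (by simp)
    have hlt : 1 / hj (b :: l) < 1 := by
      rw [div_lt_one (by linarith)]; linarith
    rw [hj_cons_cons]; linarith

lemma hj_cons_le (a : ℝ) (l : List ℝ) (h2 : ∀ x ∈ l, 2 ≤ x) : hj (a :: l) ≤ a := by
  cases l with
  | nil => simp [hj]
  | cons b l =>
    have h1 := hj_gt_one (b :: l) (by simp) h2
    have : 0 < 1 / hj (b :: l) := one_div_pos.mpr (by linarith)
    rw [hj_cons_cons]; linarith

lemma hj_gt_sub_one (a : ℝ) (l : List ℝ) (h2 : ∀ x ∈ l, 2 ≤ x) : a - 1 < hj (a :: l) := by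
  cases l with
  | nil => show a - 1 < hj [a]; simp [hj]
  | cons b l =>
    have h1 := hj_gt_one (b :: l) (by simp) h2
    have : 1 / hj (b :: l) < 1 := by
      rw [div_lt_one (by linarith)]; linarith
    rw [hj_cons_cons]; linarith

lemma hj_lt_aux : ∀ la lb lc : List ℝ, lb ≠ [] → lc ≠ [] →
    (∀ x ∈ la, 2 ≤ x) → (∀ x ∈ lb, 2 ≤ x) → (∀ x ∈ lc, 2 ≤ x) →
    lb.headI ≤ lc.headI - 1 → hj (la ++ lb) < hj (la ++ lc)
  | [], lb, lc, hb, hc, _, h2b, h2c, hhead => by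
    obtain ⟨b, tb, rfl⟩ := List.exists_cons_of_ne_nil hb
    obtain ⟨c, tc, rfl⟩ := List.exists_cons_of_ne_nil hc
    simp only [List.nil_append]
    have hle := hj_cons_le b tb (fun x hx => h2b x (List.mem_cons_of_mem b hx))
    have hgt := hj_gt_sub_one c tc (fun x hx => h2c x (List.mem_cons_of_mem c hx))
    simp only [List.headI] at hhead
    linarith
  | a :: la, lb, lc, hb, hc, h2a, h2b, h2c, hhead => by
    have ih := hj_lt_aux la lb lc hb hc
      (fun x hx => h2a x (List.mem_cons_of_mem a hx)) h2b h2c hhead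
    have ha : 2 ≤ a := h2a a (by simp)
    have hXne : la ++ lb ≠ [] := by simp [hb]
    have hYne : la ++ lc ≠ [] := by simp [hc]
    have h2X : ∀ x ∈ la ++ lb, 2 ≤ x := by
      intro x hx
      rcases List.mem_append.mp hx with h | h
      · exact h2a x (List.mem_cons_of_mem a h)
      · exact h2b x h
    have h2Y : ∀ x ∈ la ++ lc, 2 ≤ x := by
      intro x hx
      rcases List.mem_append.mp hx with h | h
      · exact h2a x (List.mem_cons_of_mem a h)
      · exact h2c x h
    have hX1 := hj_gt_one _ hXne h2X
    have hY1 := hj_gt_one _ hYne h2Y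
    obtain ⟨x, lx, hlx⟩ := List.exists_cons_of_ne_nil hXne
    obtain ⟨y, ly, hly⟩ := List.exists_cons_of_ne_nil hYne
    rw [List.cons_append, List.cons_append, hlx, hly]
    rw [hlx] at hX1 ih
    rw [hly] at hY1 ih
    rw [hj_cons_cons, hj_cons_cons]
    have := one_div_lt_one_div_of_lt (by linarith : (0:ℝ) < hj (x :: lx)) ih
    linarith

/-- If `a₁, …, a_l`, `b₁, …, b_m`, `c₁, …, c_n` are positive integers, all at least `2`,
with `b₁ < c₁`, then `[[a₁, …, a_l, b₁, …, b_m]] < [[a₁, …, a_l, c₁, …, c_n]]`. -/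
theorem hj_lt_of_head_lt (la lb lc : List ℕ) (hb : lb ≠ []) (hc : lc ≠ [])
    (h2a : ∀ x ∈ la, 2 ≤ x) (h2b : ∀ x ∈ lb, 2 ≤ x) (h2c : ∀ x ∈ lc, 2 ≤ x)
    (hhead : lb.headI < lc.headI) :
    hj ((la ++ lb).map (fun x => (x : ℝ))) < hj ((la ++ lc).map (fun x => (x : ℝ))) := by
  have e : ∀ (l m : List ℕ), ((l ++ m).map (fun x => (x : ℝ))) =
      l.map (fun x : ℕ => (x : ℝ)) ++ m.map (fun x : ℕ => (x : ℝ)) := by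
    intro l m; induction l <;> induction m <;> simp_all [Function.comp_def]
  rw [e, e]
  apply hj_lt_aux
  · simpa using hb
  · simpa using hc
  · intro x hx
    obtain ⟨y, hy, rfl⟩ := List.mem_map.mp hx
    exact_mod_cast h2a y hy
  · intro x hx
    obtain ⟨y, hy, rfl⟩ := List.mem_map.mp hx
    exact_mod_cast h2b y hy
  · intro x hx
    obtain ⟨y, hy, rfl⟩ := List.mem_map.mp hx
    exact_mod_cast h2c y hy
  · obtain ⟨b, tb, rfl⟩ := List.exists_cons_of_ne_nil hb
    obtain ⟨c, tc, rfl⟩ := List.exists_cons_of_ne_nil hc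
    simp only [List.map_cons, List.headI] at *
    have : b + 1 ≤ c := hhead
    have : (b : ℝ) + 1 ≤ (c : ℝ) := by exact_mod_cast this
    linarith
end

section
/- Let a, b, c be nonnegative integers. Then the Hirzebruch–Jung continued fraction of the sequence consisting of a copies of 2, then 3, then b copies of 2, then 3, then c copies of 2 satisfies [[(2)^a, 3, (2)^b, 3, (2)^c]] = ( ((a+2)b + 3a+5)·c + (2a+4)b + 5a+8 ) / ( ((a+1)b + 3a+2)·c + (2a+2)b + 5a+3 ). -/
lemma hj_cons (x : ℝ) (l : List ℝ) (h : l ≠ []) : hj (x :: l) = x - 1 / hj l := by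
  cases l with
  | nil => simp at h
  | cons b t => rfl

lemma hj_key (n : ℕ) (l : List ℝ) (hl : l ≠ []) (h1 : 1 < hj l) :
    hj (List.replicate n (2:ℝ) ++ l)
      = (((n:ℝ)+1) * hj l - n) / ((n:ℝ) * hj l - ((n:ℝ)-1)) ∧
    1 < hj (List.replicate n (2:ℝ) ++ l) := by
  induction n with
  | zero => simp [h1]
  | succ n ih =>
    obtain ⟨hval, hgt⟩ := ih
    set y := hj l with hy
    have hden : (0:ℝ) < (n:ℝ) * y - ((n:ℝ)-1) := by nlinarith [Nat.cast_nonneg (α := ℝ) n]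
    have hnum : (n:ℝ) * y - ((n:ℝ)-1) < ((n:ℝ)+1) * y - n := by nlinarith
    have hne : List.replicate n (2:ℝ) ++ l ≠ [] := by
      simp [List.append_eq_nil_iff, hl]
    have step : hj (List.replicate (n+1) (2:ℝ) ++ l)
        = 2 - 1 / hj (List.replicate n (2:ℝ) ++ l) := by
      rw [List.replicate_succ, List.cons_append, hj_cons _ _ hne]
    have hval' : hj (List.replicate (n+1) (2:ℝ) ++ l)
        = (((n:ℝ)+1+1) * y - (n+1)) / (((n:ℝ)+1) * y - n) := by
      rw [step, hval]
      have h2 : ((n:ℝ)+1) * y - n ≠ 0 := by nlinarith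
      field_simp
      ring
    constructor
    · rw [hval']; push_cast; ring_nf
    · rw [hval']
      rw [lt_div_iff₀ (by nlinarith)]
      nlinarith

lemma hj_base (c : ℕ) :
    hj ((3:ℝ) :: List.replicate c (2:ℝ)) = (2*(c:ℝ)+3)/((c:ℝ)+1) ∧
    1 < hj ((3:ℝ) :: List.replicate c (2:ℝ)) := by
  have hc1 : (0:ℝ) < (c:ℝ) + 1 := by positivity
  cases c with
  | zero => norm_num [hj]
  | succ k =>
    have h2 : hj [(2:ℝ)] = 2 := rfl
    have hone : (1:ℝ) < hj [(2:ℝ)] := by norm_num [h2]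
    have hk := hj_key k [(2:ℝ)] (by simp) hone
    have hrep : List.replicate (k+1) (2:ℝ) = List.replicate k (2:ℝ) ++ [(2:ℝ)] := by
      rw [← List.replicate_succ']
    have hne : List.replicate (k+1) (2:ℝ) ≠ [] := by simp
    have hv : hj (List.replicate (k+1) (2:ℝ)) = ((k:ℝ)+2)/((k:ℝ)+1) := by
      rw [hrep, hk.1, h2]
      have : (k:ℝ)*2 - ((k:ℝ)-1) = (k:ℝ)+1 := by ring
      rw [this]
      congr 1; ring
    have hvpos : (0:ℝ) < hj (List.replicate (k+1) (2:ℝ)) := by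
      rw [hv]; positivity
    have hval : hj ((3:ℝ) :: List.replicate (k+1) (2:ℝ))
        = 3 - 1 / (((k:ℝ)+2)/((k:ℝ)+1)) := by
      rw [hj_cons _ _ hne, hv]
    constructor
    · rw [hval]
      have hk2 : ((k:ℝ)+2) ≠ 0 := by positivity
      push_cast
      field_simp
      ring
    · rw [hval]
      have : (1:ℝ)/(((k:ℝ)+2)/((k:ℝ)+1)) = ((k:ℝ)+1)/((k:ℝ)+2) := by
        field_simp
      rw [this]
      have hlt : ((k:ℝ)+1)/((k:ℝ)+2) < 2 := by
        rw [div_lt_iff₀ (by positivity)]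
        push_cast; nlinarith [Nat.cast_nonneg (α := ℝ) k]
      linarith

/-- For nonnegative integers `a`, `b`, `c`,
`[[(2)^a, 3, (2)^b, 3, (2)^c]]
  = (((a+2)b + 3a+5)c + (2a+4)b + 5a+8) / (((a+1)b + 3a+2)c + (2a+2)b + 5a+3)`. -/
theorem hj_two_threes (a b c : ℕ) :
    hj (List.replicate a (2 : ℝ) ++
        (3 : ℝ) :: (List.replicate b (2 : ℝ) ++ (3 : ℝ) :: List.replicate c (2 : ℝ))) =
      ((((a : ℝ) + 2) * b + 3 * a + 5) * c + (2 * (a : ℝ) + 4) * b + 5 * a + 8) /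
        ((((a : ℝ) + 1) * b + 3 * a + 2) * c + (2 * (a : ℝ) + 2) * b + 5 * a + 3) := by
  obtain ⟨h0, h0gt⟩ := hj_base c
  have hne0 : (3:ℝ) :: List.replicate c (2:ℝ) ≠ [] := by simp
  obtain ⟨h1, h1gt⟩ := hj_key b _ hne0 h0gt
  -- z value
  have hc1 : (0:ℝ) < (c:ℝ)+1 := by positivity
  have hzden : (0:ℝ) < ((b:ℝ)+1)*(c:ℝ) + 2*(b:ℝ) + 1 := by positivity
  have hz : hj (List.replicate b (2:ℝ) ++ (3:ℝ) :: List.replicate c (2:ℝ))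
      = (((b:ℝ)+2)*(c:ℝ) + 2*b + 3) / (((b:ℝ)+1)*(c:ℝ) + 2*b + 1) := by
    rw [h1, h0]
    rw [div_eq_div_iff]
    · field_simp
      ring
    · have : ((b:ℝ) * ((2*(c:ℝ)+3)/((c:ℝ)+1)) - ((b:ℝ)-1)) > 0 := by
        rw [← h0]; nlinarith [h0gt]
      linarith [this]
    · positivity
  have hne1 : ((3:ℝ) :: (List.replicate b (2:ℝ) ++ (3:ℝ) :: List.replicate c (2:ℝ))) ≠ [] := by simp
  have hy1 : hj ((3:ℝ) :: (List.replicate b (2:ℝ) ++ (3:ℝ) :: List.replicate c (2:ℝ)))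
      = ((2*(b:ℝ)+5)*(c:ℝ) + 4*b + 8) / (((b:ℝ)+2)*(c:ℝ) + 2*b + 3) := by
    rw [hj_cons _ _ (by simp), hz, one_div_div]
    have hN : (0:ℝ) < ((b:ℝ)+2)*(c:ℝ) + 2*b + 3 := by positivity
    field_simp
    ring
  have hy1gt : 1 < hj ((3:ℝ) :: (List.replicate b (2:ℝ) ++ (3:ℝ) :: List.replicate c (2:ℝ))) := by
    rw [hy1, lt_div_iff₀ (by positivity)]
    nlinarith [Nat.cast_nonneg (α := ℝ) b, Nat.cast_nonneg (α := ℝ) c]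
  obtain ⟨h2, _⟩ := hj_key a _ hne1 hy1gt
  rw [h2, hy1]
  have hd1 : (0:ℝ) < ((b:ℝ)+2)*(c:ℝ) + 2*b + 3 := by positivity
  have hd2 : (0:ℝ) < (((a : ℝ) + 1) * b + 3 * a + 2) * c + (2 * (a : ℝ) + 2) * b + 5 * a + 3 := by positivity
  rw [div_eq_div_iff]
  · field_simp
    ring
  · have : ((a:ℝ) * (((2*(b:ℝ)+5)*(c:ℝ) + 4*b + 8) / (((b:ℝ)+2)*(c:ℝ) + 2*b + 3)) - ((a:ℝ)-1)) > 0 := by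
      rw [← hy1]; nlinarith [hy1gt]
    linarith
  · positivity
end

section
/- Let p be a prime, let r ≥ 1, and for i = 1, …, r let c_i be an integer and d_i a positive integer such that p does not divide d_i. Assume that for every positive integer n, Σ_{i=1}^r ⌊n·c_i/d_i⌋ ≥ −1. Then for every positive integer m, Σ_{i=1}^r ⌊−p·m·c_i/d_i⌋ + #{ i : d_i does not divide m·c_i } ≤ 1. -/
lemma neg_ediv_aux (a b : ℤ) (hb : 0 < b) :
    (-a) / b = -(a / b) - (if b ∣ a then 0 else 1) := by
  rcases em (b ∣ a) with h | h
  · obtain ⟨k, rfl⟩ := h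
    rw [show -(b * k) = b * (-k) by ring, Int.mul_ediv_cancel_left _ hb.ne',
      Int.mul_ediv_cancel_left _ hb.ne', if_pos (Dvd.intro k rfl)]
    ring
  · have h1 := Int.mul_ediv_add_emod a b
    have h2 : 0 < a % b := lt_of_le_of_ne (Int.emod_nonneg a hb.ne') (by
      intro hh
      exact h (Int.dvd_of_emod_eq_zero hh.symm))
    have h3 : a % b < b := Int.emod_lt_of_pos a hb
    have key : -a = (b - a % b) + b * (-(a / b) - 1) := by linarith
    rw [key, Int.add_mul_ediv_left _ _ hb.ne',
      Int.ediv_eq_zero_of_lt (by linarith) (by linarith), if_neg h]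
    ring

/-- Arithmetic content of the paper's Theorem 3.6: if `p` is prime, `p ∤ dᵢ`, and
`∑ᵢ ⌊n·cᵢ/dᵢ⌋ ≥ −1` for every positive integer `n`, then for every positive integer `m`,
`∑ᵢ ⌊−p·m·cᵢ/dᵢ⌋ + #{i : dᵢ ∤ m·cᵢ} ≤ 1`. -/
theorem floor_sum_neg_p_add_card_le_one (p : ℕ) (hp : p.Prime) (r : ℕ) (hr : 1 ≤ r)
    (c : Fin r → ℤ) (d : Fin r → ℕ) (hd : ∀ i, 0 < d i)
    (hpd : ∀ i, ¬ p ∣ d i)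
    (hrat : ∀ n : ℕ, 0 < n → -1 ≤ ∑ i, ⌊((n : ℚ) * (c i : ℚ)) / (d i : ℚ)⌋) :
    ∀ m : ℕ, 0 < m →
      (∑ i, ⌊(-((p : ℚ) * (m : ℚ)) * (c i : ℚ)) / (d i : ℚ)⌋) +
        ((Finset.univ.filter fun i => ¬ ((d i : ℤ) ∣ (m : ℤ) * c i)).card : ℤ) ≤ 1 := by
  intro m hm
  have hdvd : ∀ i, ((d i : ℤ) ∣ (p : ℤ) * ((m : ℤ) * c i)) ↔ ((d i : ℤ) ∣ (m : ℤ) * c i) := by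
    intro i
    constructor
    · intro h
      have hcop : IsCoprime ((d i : ℤ)) ((p : ℤ)) := by
        rw [Int.isCoprime_iff_gcd_eq_one, Int.gcd_natCast_natCast]
        exact Nat.Coprime.symm ((hp.coprime_iff_not_dvd).2 (hpd i))
      exact hcop.dvd_of_dvd_mul_left h
    · intro h
      exact h.mul_left _
  -- per-index floor identity
  have key : ∀ i : Fin r,
      ⌊(-((p : ℚ) * (m : ℚ)) * (c i : ℚ)) / (d i : ℚ)⌋
        = -⌊(((p * m : ℕ) : ℚ) * (c i : ℚ)) / (d i : ℚ)⌋
          - (if (d i : ℤ) ∣ (m : ℤ) * c i then 0 else 1) := by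
    intro i
    have e1 : (-((p : ℚ) * (m : ℚ)) * (c i : ℚ)) / (d i : ℚ)
        = ((-((p : ℤ) * m * c i) : ℤ) : ℚ) / ((d i : ℕ) : ℚ) := by push_cast; ring
    have e2 : (((p * m : ℕ) : ℚ) * (c i : ℚ)) / (d i : ℚ)
        = ((((p : ℤ) * m * c i) : ℤ) : ℚ) / ((d i : ℕ) : ℚ) := by push_cast; ring
    rw [e1, e2, Rat.floor_intCast_div_natCast, Rat.floor_intCast_div_natCast,
      neg_ediv_aux _ _ (by exact_mod_cast hd i)]
    congr 1
    have : ((d i : ℤ) ∣ (p : ℤ) * m * c i) ↔ ((d i : ℤ) ∣ (m : ℤ) * c i) := by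
      rw [mul_assoc]; exact hdvd i
    simp [this]
  have hsum := hrat (p * m) (Nat.mul_pos hp.pos hm)
  have hcard : ((Finset.univ.filter fun i => ¬ ((d i : ℤ) ∣ (m : ℤ) * c i)).card : ℤ)
      = ∑ i : Fin r, (if (d i : ℤ) ∣ (m : ℤ) * c i then (0 : ℤ) else 1) := by
    rw [Finset.card_filter]
    push_cast
    exact Finset.sum_congr rfl (fun i _ => by by_cases h : (d i : ℤ) ∣ (m : ℤ) * c i <;> simp [h])
  have e : (∑ i, ⌊(-((p : ℚ) * (m : ℚ)) * (c i : ℚ)) / (d i : ℚ)⌋)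
      = (-∑ i, ⌊(((p * m : ℕ) : ℚ) * (c i : ℚ)) / (d i : ℚ)⌋)
        - ∑ i : Fin r, (if (d i : ℤ) ∣ (m : ℤ) * c i then (0 : ℤ) else 1) := by
    rw [← Finset.sum_neg_distrib, ← Finset.sum_sub_distrib]
    exact Finset.sum_congr rfl fun i _ => key i
  rw [hcard, e]
  linarith
end

section
/- Let s and r be positive integers and p a prime. For each i = 1, …, r let (q_i^{(l)})_{l≥1} be a nondecreasing sequence of rationals with 0 < q_i^{(l)} < 1 converging to a rational q_i = c_i/d_i (with 0 < c_i < d_i integers), and assume p > d_i for every i. Then for every positive integer n there exists L such that for all l ≥ L: −p·n·s + Σ_{i=1}^r ⌊p·n·q_i^{(l)}⌋ + #{ i : −p⌊n·q_i^{(l)}⌋ + ⌊p·n·q_i^{(l)}⌋ ≠ 0 } ≤ −p·n·s + Σ_{i=1}^r ⌊p·n·q_i⌋ + #{ i : −p⌊n·q_i⌋ + ⌊p·n·q_i⌋ ≠ 0 }. -/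
/-- Key termwise inequality: if `a ≤ b` then
`⌊pna⌋ + 1_{-p⌊na⌋+⌊pna⌋ ≠ 0} ≤ ⌊pnb⌋ + 1_{-p⌊nb⌋+⌊pnb⌋ ≠ 0}`. -/
lemma term_le (p n : ℕ) (hp : 0 < p) (a b : ℚ) (hab : a ≤ b) :
    ⌊(p : ℚ) * (n : ℚ) * a⌋ +
      (if -(p : ℤ) * ⌊(n : ℚ) * a⌋ + ⌊(p : ℚ) * (n : ℚ) * a⌋ ≠ 0 then (1 : ℤ) else 0) ≤
    ⌊(p : ℚ) * (n : ℚ) * b⌋ +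
      (if -(p : ℤ) * ⌊(n : ℚ) * b⌋ + ⌊(p : ℚ) * (n : ℚ) * b⌋ ≠ 0 then (1 : ℤ) else 0) := by
  have hpq : (0 : ℚ) < (p : ℚ) := by exact_mod_cast hp
  have hAB : ⌊(p : ℚ) * (n : ℚ) * a⌋ ≤ ⌊(p : ℚ) * (n : ℚ) * b⌋ := by
    apply Int.floor_le_floor
    have : (0:ℚ) ≤ (p : ℚ) * (n : ℚ) := by positivity
    exact mul_le_mul_of_nonneg_left hab this
  rcases lt_or_eq_of_le hAB with hlt | heq
  · have h1 : (if -(p : ℤ) * ⌊(n : ℚ) * a⌋ + ⌊(p : ℚ) * (n : ℚ) * a⌋ ≠ 0 then (1 : ℤ)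
        else 0) ≤ 1 := by split <;> omega
    have h2 : (0:ℤ) ≤ (if -(p : ℤ) * ⌊(n : ℚ) * b⌋ + ⌊(p : ℚ) * (n : ℚ) * b⌋ ≠ 0 then (1 : ℤ)
        else 0) := by split <;> omega
    omega
  · -- floors of pna and pnb are equal; show indicator for a ≤ indicator for b
    have key : -(p : ℤ) * ⌊(n : ℚ) * b⌋ + ⌊(p : ℚ) * (n : ℚ) * b⌋ = 0 →
        -(p : ℤ) * ⌊(n : ℚ) * a⌋ + ⌊(p : ℚ) * (n : ℚ) * a⌋ = 0 := by
      intro hb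
      have hb' : ⌊(p : ℚ) * (n : ℚ) * b⌋ = (p : ℤ) * ⌊(n : ℚ) * b⌋ := by linarith
      have hfa_le : ⌊(n : ℚ) * a⌋ ≤ ⌊(n : ℚ) * b⌋ := by
        apply Int.floor_le_floor
        exact mul_le_mul_of_nonneg_left hab (by positivity)
      have hge : ⌊(n : ℚ) * b⌋ ≤ ⌊(n : ℚ) * a⌋ := by
        rw [Int.le_floor]
        have h1 : ((⌊(p : ℚ) * (n : ℚ) * b⌋ : ℤ) : ℚ) ≤ (p : ℚ) * ((n : ℚ) * a) := by
          rw [← heq, ← mul_assoc]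
          exact Int.floor_le _
        rw [hb'] at h1
        push_cast at h1
        exact le_of_mul_le_mul_left h1 hpq
      have hfa : ⌊(n : ℚ) * a⌋ = ⌊(n : ℚ) * b⌋ := le_antisymm hfa_le hge
      rw [hfa, heq]
      omega
    split_ifs with h1 h2 <;> simp_all <;> omega

/-- Arithmetic content of the paper's Lemma 4.3(3): if `qᵢ⁽ˡ⁾` are nondecreasing sequences
of rationals in `(0,1)` converging to `cᵢ/dᵢ` (with `0 < cᵢ < dᵢ` and `p > dᵢ` for a
prime `p`), then for every positive integer `n` and all sufficiently large `l`,
`−pns + ∑ᵢ ⌊pn·qᵢ⁽ˡ⁾⌋ + #{i : −p⌊n·qᵢ⁽ˡ⁾⌋ + ⌊pn·qᵢ⁽ˡ⁾⌋ ≠ 0}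
  ≤ −pns + ∑ᵢ ⌊pn·qᵢ⌋ + #{i : −p⌊n·qᵢ⌋ + ⌊pn·qᵢ⌋ ≠ 0}`. -/
theorem eventually_deg_le (s r p : ℕ) (hs : 0 < s) (hr : 0 < r) (hp : p.Prime)
    (q : Fin r → ℕ → ℚ) (c d : Fin r → ℤ)
    (hc : ∀ i, 0 < c i) (hcd : ∀ i, c i < d i)
    (hq0 : ∀ i l, 0 < q i l) (hq1 : ∀ i l, q i l < 1)
    (hmono : ∀ i, Monotone (q i))
    (htend : ∀ i, Filter.Tendsto (q i) Filter.atTop (nhds ((c i : ℚ) / (d i : ℚ))))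
    (hpd : ∀ i, d i < (p : ℤ)) :
    ∀ n : ℕ, 0 < n → ∃ L : ℕ, ∀ l ≥ L,
      -(p : ℤ) * n * s + (∑ i, ⌊(p : ℚ) * (n : ℚ) * q i l⌋) +
          ((Finset.univ.filter fun i =>
            -(p : ℤ) * ⌊(n : ℚ) * q i l⌋ + ⌊(p : ℚ) * (n : ℚ) * q i l⌋ ≠ 0).card : ℤ) ≤
        -(p : ℤ) * n * s + (∑ i, ⌊(p : ℚ) * (n : ℚ) * ((c i : ℚ) / (d i : ℚ))⌋) +
          ((Finset.univ.filter fun i =>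
            -(p : ℤ) * ⌊(n : ℚ) * ((c i : ℚ) / (d i : ℚ))⌋ +
              ⌊(p : ℚ) * (n : ℚ) * ((c i : ℚ) / (d i : ℚ))⌋ ≠ 0).card : ℤ) := by
  intro n hn
  refine ⟨0, fun l _ => ?_⟩
  have hab : ∀ i, q i l ≤ (c i : ℚ) / (d i : ℚ) := fun i =>
    (hmono i).ge_of_tendsto (htend i) l
  have hcard : ∀ (P : Fin r → Prop) [DecidablePred P],
      ((Finset.univ.filter P).card : ℤ) = ∑ i, if P i then (1:ℤ) else 0 := by
    intro P _
    rw [Finset.card_filter]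
    push_cast [apply_ite]
    rfl
  rw [hcard, hcard, add_assoc, add_assoc, ← Finset.sum_add_distrib,
    ← Finset.sum_add_distrib]
  apply add_le_add_right
  exact Finset.sum_le_sum fun i _ => term_le p n hp.pos _ _ (hab i)
end
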